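/- For every string x of length n and all a, b, c: if (a, b+c) ∈ P_x^{ε} then (a + b + O(log n), c) ∈ P_x^{ε + O(log n)}. That is, the ε-strong profile of x satisfies the trade-off property: models witnessing strong-profile points can be split into smaller pieces while remaining strong. -/

import Mathlib

open scoped Classical

abbrev BinStr := List Bool

/-- A decompressor: a partial computable map (program, condition) ↦ output. -/
def IsDecompressor (D : BinStr → BinStr → Part BinStr) : Prop := Partrec₂ D

/-- Conditional Kolmogorov complexity with respect to decompressor `D`. -/
noncomputable def Cc (D : BinStr → BinStr → Part BinStr) (x y : BinStr) : ℕ :=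
  sInf { n | ∃ p : BinStr, p.length = n ∧ x ∈ D p y }

/-- A decompressor is universal if every decompressor is simulated via a prefix. -/
def IsUniversal (U : BinStr → BinStr → Part BinStr) : Prop :=
  IsDecompressor U ∧ ∀ D, IsDecompressor D → ∃ c : BinStr, ∀ p y, D p y = U (c ++ p) y

/-- Unconditional complexity. -/
noncomputable def C (U : BinStr → BinStr → Part BinStr) (x : BinStr) : ℕ := Cc U x []

/-- The fixed computable encoding of a finite set of strings as a string. -/
def codeSet (A : Finset BinStr) : BinStr := Nat.bits (Encodable.encode A)

/-- Complexity of a finite set of strings. -/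
noncomputable def CSet (U : BinStr → BinStr → Part BinStr) (A : Finset BinStr) : ℕ :=
  C U (codeSet A)

/-- The profile of a string `x`. -/
noncomputable def profile (U : BinStr → BinStr → Part BinStr) (x : BinStr) : Set (ℕ × ℕ) :=
  { ml | ∃ A : Finset BinStr, x ∈ A ∧ CSet U A ≤ ml.1 ∧ Nat.log 2 A.card ≤ ml.2 }

/-- Total conditional complexity `CT(x|y)`: length of a shortest *total* program mapping y to x. -/
noncomputable def CT (U : BinStr → BinStr → Part BinStr) (x y : BinStr) : ℕ :=
  sInf { n | ∃ p : BinStr, p.length = n ∧ (∀ y' : BinStr, (U p y').Dom) ∧ x ∈ U p y }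

/-- The ε-strong profile of `x`. -/
noncomputable def strongProfile (U : BinStr → BinStr → Part BinStr) (ε : ℕ) (x : BinStr) :
    Set (ℕ × ℕ) :=
  { ml | ∃ A : Finset BinStr, x ∈ A ∧ CT U (codeSet A) x ≤ ε ∧
      CSet U A ≤ ml.1 ∧ Nat.log 2 A.card ≤ ml.2 }

/-- `Ω_m`: the number of strings of complexity at most m. -/
noncomputable def Omega (U : BinStr → BinStr → Part BinStr) (m : ℕ) : ℕ :=
  Set.ncard { x : BinStr | C U x ≤ m }

/-- The Finset of all binary strings of length n. -/
def allStr : ℕ → Finset BinStr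
  | 0 => {[]}
  | n + 1 => (allStr n).image (List.cons true) ∪ (allStr n).image (List.cons false)

/-- The cylinder `{ u ++ v : v ∈ {0,1}^m }`. -/
def cyl (u : BinStr) (m : ℕ) : Finset BinStr := (allStr m).image (fun v => u ++ v)

namespace SPT


/-- encode-order on `BinStr`. -/
def r (a b : BinStr) : Prop := Encodable.encode a ≤ Encodable.encode b

instance : DecidableRel r := fun _ _ => Nat.decLe _ _
instance : IsTrans BinStr r := ⟨fun _ _ _ => Nat.le_trans⟩
instance : IsAntisymm BinStr r :=
  ⟨fun _ _ h h' => Encodable.encode_injective (Nat.le_antisymm h h')⟩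
instance : IsTotal BinStr r := ⟨fun _ _ => Nat.le_total _ _⟩

theorem encode_finset_eq_encode_sort (S : Finset BinStr) :
    Encodable.encode S = Encodable.encode (S.sort r) := rfl

theorem encode_toFinset_eq {M : List BinStr} (hnd : M.Nodup) (hs : M.Pairwise r) :
    Encodable.encode (M.toFinset) = Encodable.encode M := by
  rw [encode_finset_eq_encode_sort]
  congr 1
  have h1 : List.Perm (M.toFinset.sort r) M := by
    refine (List.perm_ext_iff_of_nodup (Finset.sort_nodup (s := M.toFinset) (r := r)) hnd).2 fun z => ?_
    simp [Finset.mem_sort]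
  exact List.Perm.eq_of_pairwise' (Finset.pairwise_sort (s := M.toFinset) (r := r)) hs h1

/-- binary decoding of a bit list (LSB first). -/
def dN (l : BinStr) : ℕ := l.foldr (fun b m => 2 * m + cond b 1 0) 0

theorem dN_bits (m : ℕ) : dN (Nat.bits m) = m := by
  induction m using Nat.strong_induction_on with
  | _ m ih =>
    rcases Nat.eq_zero_or_pos m with h | h
    · simp [h, dN]
    rcases Nat.even_or_odd m with he | ho
    · obtain ⟨t, ht⟩ := he
      have ht' : m = 2 * t := by omega
      have htpos : t ≠ 0 := by omega
      rw [ht', Nat.bit0_bits t htpos]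
      have := ih t (by omega)
      simp [dN] at this ⊢
      omega
    · obtain ⟨t, ht⟩ := ho
      rw [ht, Nat.bit1_bits t]
      have := ih t (by omega)
      simp [dN] at this ⊢
      omega

/-- a segment of a list: `(l.drop m).take s`, in a primrec-friendly form. -/
def seg {α : Type*} (m s : ℕ) (l : List α) : List α :=
  (List.range s).filterMap (fun i => l[m+i]?)

theorem seg_eq {α : Type*} (m s : ℕ) (l : List α) : seg m s l = (l.drop m).take s := by
  induction s with
  | zero => simp [seg]
  | succ s ih =>
    rw [seg, List.range_succ, List.filterMap_append, ← seg, ih, List.take_succ]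
    rw [List.filterMap_cons, List.filterMap_nil, List.getElem?_drop]
    cases l[m+s]? <;> simp


theorem bits_rec {n : ℕ} (h : n ≠ 0) :
    Nat.bits n = decide (n % 2 = 1) :: Nat.bits (n / 2) := by
  rcases Nat.even_or_odd n with he | ho
  · obtain ⟨t, ht⟩ := he
    have ht' : n = 2 * t := by omega
    have h2 : n % 2 = 0 := by omega
    have h3 : n / 2 = t := by omega
    rw [ht', Nat.bit0_bits t (by omega)]
    rw [ht'] at h2 h3
    rw [h2, h3]
    simp
  · obtain ⟨t, ht⟩ := ho
    have h2 : n % 2 = 1 := by omega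
    have h3 : n / 2 = t := by omega
    rw [ht, Nat.bit1_bits t, ← ht, h2, h3]
    simp

theorem primrec_bits : Primrec Nat.bits := by
  have H : ∀ (_ : Unit) (n : ℕ),
      (fun (_ : Unit) (l : List (List Bool)) =>
        some (if l.length = 0 then ([] : List Bool)
          else decide (l.length % 2 = 1) :: l.getD (l.length / 2) [])) ()
        ((List.range n).map (fun k => Nat.bits k)) = some (Nat.bits n) := by
    intro _ n
    simp only [List.length_map, List.length_range]
    rcases Nat.eq_zero_or_pos n with h | h
    · simp [h]
    · have hlt : n / 2 < n := Nat.div_lt_self h (by norm_num)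
      have : ((List.range n).map (fun k => Nat.bits k)).getD (n / 2) [] = Nat.bits (n / 2) := by
        rw [List.getD_eq_getElem?_getD]
        simp [List.getElem?_map, List.getElem?_range hlt]
      rw [if_neg (by omega), this, ← bits_rec (by omega)]
  have hg : Primrec₂ (fun (_ : Unit) (l : List (List Bool)) =>
      some (if l.length = 0 then ([] : List Bool)
        else decide (l.length % 2 = 1) :: l.getD (l.length / 2) [])) := by
    have hlen : Primrec (fun (p : Unit × List (List Bool)) => p.2.length) :=
      Primrec.list_length.comp Primrec.snd
    have hc : PrimrecPred (fun (p : Unit × List (List Bool)) => p.2.length = 0) :=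
      PrimrecPred.comp (p := fun n : ℕ => n = 0)
        (PrimrecRel.comp Primrec.eq Primrec.id (Primrec.const 0)) hlen
    have hbody : Primrec (fun (p : Unit × List (List Bool)) =>
        if p.2.length = 0 then ([] : List Bool)
        else decide (p.2.length % 2 = 1) :: p.2.getD (p.2.length / 2) []) := by
      refine Primrec.ite hc (Primrec.const []) ?_
      refine Primrec.list_cons.comp ?_ ?_
      · exact (PrimrecRel.comp Primrec.eq (Primrec.nat_mod.comp hlen (Primrec.const 2))
          (Primrec.const 1)).decide
      · exact (Primrec.list_getD []).comp Primrec.snd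
          (Primrec.nat_div.comp hlen (Primrec.const 2))
    exact Primrec.to₂ (Primrec.option_some.comp hbody)
  have := Primrec.nat_strong_rec (fun (_ : Unit) (n : ℕ) => Nat.bits n) hg H
  exact this.comp (Primrec.const ()) Primrec.id

theorem primrec_dN : Primrec dN := by
  have h : Primrec₂ (fun (_ : BinStr) (p : Bool × ℕ) => 2 * p.2 + cond p.1 1 0) := by
    unfold Primrec₂
    have hb : Primrec (fun q : BinStr × (Bool × ℕ) => q.2.1) :=
      Primrec.fst.comp Primrec.snd
    have hn : Primrec (fun q : BinStr × (Bool × ℕ) => q.2.2) :=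
      Primrec.snd.comp Primrec.snd
    exact Primrec.nat_add.comp
      (Primrec.nat_mul.comp (Primrec.const 2) hn)
      (Primrec.cond hb (Primrec.const 1) (Primrec.const 0))
  have h2 := Primrec.list_foldr (α := BinStr) (β := Bool) (σ := ℕ) (f := id)
    (g := fun _ => 0) (h := fun _ p => 2 * p.2 + cond p.1 1 0) Primrec.id (Primrec.const 0) h
  exact h2.of_eq fun l => rfl

theorem primrec_pow2 : Primrec (fun c : ℕ => 2 ^ c) := by
  have h2 : Primrec₂ (fun a b : ℕ => a ^ b) :=
    Primrec₂.unpaired'.1 Nat.Primrec.pow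
  exact h2.comp (Primrec.const 2) Primrec.id

theorem primrec_seg {α β : Type} [Primcodable α] [Primcodable β] {m s : β → ℕ}
    {l : β → List α} (hm : Primrec m) (hs : Primrec s) (hl : Primrec l) :
    Primrec (fun b => seg (m b) (s b) (l b)) := by
  unfold seg
  exact Primrec.listFilterMap (Primrec.list_range.comp hs)
    (Primrec.to₂ (Primrec.list_getElem?.comp (hl.comp Primrec.fst)
      (Primrec.nat_add.comp (hm.comp Primrec.fst) Primrec.snd)))

/-! ### decompressors -/

def idx {α : Type} [DecidableEq α] (y : α) (l : List α) : ℕ :=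
  l.findIdx (fun z => decide (z = y))

def pk (p : BinStr) : ℕ := idx false p
def tV (p : BinStr) : ℕ := dN (seg (pk p + 1) (pk p) p)
def jC (p : BinStr) : ℕ := (tV p).unpair.2.unpair.2
def iC (p : BinStr) : ℕ := dN (seg (pk p + 1 + pk p) (jC p) p)
def qT (p : BinStr) : BinStr := seg (pk p + 1 + pk p) p.length p
def qC (p : BinStr) : BinStr := seg (pk p + 1 + pk p + jC p) p.length p

def Fof (n : ℕ) (s : BinStr) : List (List Bool) :=
  ((Encodable.decode (dN s)).getD ([] : List (List Bool))).filter (fun z => z.length == n)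

def outT (p y s : BinStr) : BinStr :=
  let c' := (tV p).unpair.2
  let F := Fof (tV p).unpair.1 s
  Nat.bits (Encodable.encode (seg ((idx y F / 2 ^ c') * 2 ^ c') (2 ^ c') F))

def outC (p s : BinStr) : BinStr :=
  let c' := (tV p).unpair.2.unpair.1
  Nat.bits (Encodable.encode (seg (iC p * 2 ^ c') (2 ^ c') (Fof (tV p).unpair.1 s)))

def Dt (U : BinStr → BinStr → Part BinStr) (p y : BinStr) : Part BinStr :=
  (U (qT p) y).map (outT p y)

def Dc (U : BinStr → BinStr → Part BinStr) (p y : BinStr) : Part BinStr :=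
  (U (qC p) []).map (outC p)

theorem primrec_idx {α β : Type} [Primcodable α] [DecidableEq α] [Primcodable β]
    {y : β → α} {l : β → List α} (hy : Primrec y) (hl : Primrec l) :
    Primrec (fun b => idx (y b) (l b)) := by
  unfold idx
  exact Primrec.list_findIdx hl
    (PrimrecRel.comp Primrec.eq Primrec.snd (hy.comp Primrec.fst)).decide

theorem primrec_pk : Primrec pk :=
  primrec_idx (Primrec.const false) Primrec.id

theorem primrec_tV : Primrec tV :=
  primrec_dN.comp (primrec_seg (Primrec.succ.comp primrec_pk) primrec_pk Primrec.id)

theorem primrec_jC : Primrec jC :=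
  (Primrec.snd.comp Primrec.unpair).comp
    ((Primrec.snd.comp Primrec.unpair).comp primrec_tV)

theorem primrec_iC : Primrec iC :=
  primrec_dN.comp (primrec_seg
    (Primrec.nat_add.comp (Primrec.succ.comp primrec_pk) primrec_pk) primrec_jC Primrec.id)

theorem primrec_qT : Primrec qT :=
  primrec_seg (Primrec.nat_add.comp (Primrec.succ.comp primrec_pk) primrec_pk)
    Primrec.list_length Primrec.id

theorem primrec_qC : Primrec qC :=
  primrec_seg (Primrec.nat_add.comp
      (Primrec.nat_add.comp (Primrec.succ.comp primrec_pk) primrec_pk) primrec_jC)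
    Primrec.list_length Primrec.id

theorem primrec_Fof : Primrec₂ Fof := by
  unfold Primrec₂ Fof
  have hL : Primrec (fun q : ℕ × BinStr =>
      ((Encodable.decode (dN q.2)).getD ([] : List (List Bool)))) :=
    Primrec.option_getD.comp (Primrec.decode.comp (primrec_dN.comp Primrec.snd))
      (Primrec.const [])
  have hfm : Primrec (fun q : ℕ × BinStr =>
      ((Encodable.decode (dN q.2)).getD ([] : List (List Bool))).filterMap
        (fun z => bif z.length == q.1 then some z else none)) := by
    refine Primrec.listFilterMap hL ?_
    unfold Primrec₂
    exact Primrec.cond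
      (Primrec.beq.comp (Primrec.list_length.comp Primrec.snd)
        (Primrec.fst.comp Primrec.fst))
      (Primrec.option_some.comp Primrec.snd) (Primrec.const none)
  refine hfm.of_eq fun q => ?_
  generalize ((Encodable.decode (dN q.2)).getD ([] : List (List Bool))) = L
  induction L with
  | nil => rfl
  | cons z L ih =>
    simp only [List.filterMap_cons, List.filter_cons]
    cases h : (z.length == q.1) <;> simp [h, ih]

theorem primrec_outC : Primrec₂ outC := by
  unfold Primrec₂ outC
  simp only []
  have hp : Primrec (fun q : BinStr × BinStr => q.1) := Primrec.fst
  have hc' : Primrec (fun q : BinStr × BinStr => (tV q.1).unpair.2.unpair.1) :=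
    (Primrec.fst.comp Primrec.unpair).comp
      ((Primrec.snd.comp Primrec.unpair).comp (primrec_tV.comp hp))
  have hpow : Primrec (fun q : BinStr × BinStr => 2 ^ (tV q.1).unpair.2.unpair.1) :=
    primrec_pow2.comp hc'
  have hF : Primrec (fun q : BinStr × BinStr => Fof (tV q.1).unpair.1 q.2) :=
    primrec_Fof.comp ((Primrec.fst.comp Primrec.unpair).comp (primrec_tV.comp hp))
      Primrec.snd
  exact primrec_bits.comp (Primrec.encode.comp
    (primrec_seg (Primrec.nat_mul.comp (primrec_iC.comp hp) hpow) hpow hF))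

theorem primrec_outT : Primrec (fun q : (BinStr × BinStr) × BinStr =>
    outT q.1.1 q.1.2 q.2) := by
  unfold outT
  simp only []
  have hp : Primrec (fun q : (BinStr × BinStr) × BinStr => q.1.1) :=
    Primrec.fst.comp Primrec.fst
  have hy : Primrec (fun q : (BinStr × BinStr) × BinStr => q.1.2) :=
    Primrec.snd.comp Primrec.fst
  have hc' : Primrec (fun q : (BinStr × BinStr) × BinStr => (tV q.1.1).unpair.2) :=
    (Primrec.snd.comp Primrec.unpair).comp (primrec_tV.comp hp)
  have hpow : Primrec (fun q : (BinStr × BinStr) × BinStr => 2 ^ (tV q.1.1).unpair.2) :=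
    primrec_pow2.comp hc'
  have hF : Primrec (fun q : (BinStr × BinStr) × BinStr => Fof (tV q.1.1).unpair.1 q.2) :=
    primrec_Fof.comp ((Primrec.fst.comp Primrec.unpair).comp (primrec_tV.comp hp))
      Primrec.snd
  have hidx : Primrec (fun q : (BinStr × BinStr) × BinStr =>
      idx q.1.2 (Fof (tV q.1.1).unpair.1 q.2)) :=
    primrec_idx hy hF
  exact primrec_bits.comp (Primrec.encode.comp
    (primrec_seg (Primrec.nat_mul.comp (Primrec.nat_div.comp hidx hpow) hpow) hpow hF))

theorem partrec_Dt {U : BinStr → BinStr → Part BinStr} (hU : Partrec₂ U) :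
    Partrec₂ (Dt U) := by
  unfold Partrec₂ Dt
  refine Partrec.map (hU.comp (primrec_qT.to_comp.comp Computable.fst) Computable.snd) ?_
  exact (Primrec.to_comp primrec_outT).to₂

theorem partrec_Dc {U : BinStr → BinStr → Part BinStr} (hU : Partrec₂ U) :
    Partrec₂ (Dc U) := by
  unfold Partrec₂ Dc
  refine Partrec.map (hU.comp (primrec_qC.to_comp.comp Computable.fst)
    (Computable.const [])) ?_
  exact ((primrec_outC.comp (Primrec.fst.comp Primrec.fst) Primrec.snd).to_comp).to₂

/-! ### program framing -/

def mkP (t rest : BinStr) : BinStr :=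
  List.replicate t.length true ++ false :: (t ++ rest)

theorem length_mkP (t rest : BinStr) :
    (mkP t rest).length = 2 * t.length + 1 + rest.length := by
  simp [mkP]; ring

theorem pk_mkP (t rest : BinStr) : pk (mkP t rest) = t.length := by
  unfold pk idx mkP
  generalize t ++ rest = l
  induction t.length with
  | zero => simp [List.findIdx_cons]
  | succ k ih => simpa [List.replicate_succ, List.findIdx_cons] using ih

theorem drop_mkP (t rest : BinStr) : (mkP t rest).drop (t.length + 1) = t ++ rest := by
  have h : mkP t rest = (List.replicate t.length true ++ [false]) ++ (t ++ rest) := by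
    simp [mkP]
  have hlen : (List.replicate t.length true ++ [false]).length = t.length + 1 := by simp
  rw [h, ← hlen, List.drop_left]

theorem drop_mkP2 (t rest : BinStr) :
    (mkP t rest).drop (t.length + 1 + t.length) = rest := by
  rw [← List.drop_drop, drop_mkP, List.drop_left]

theorem tV_mkP (t rest : BinStr) : tV (mkP t rest) = dN t := by
  unfold tV
  rw [pk_mkP, seg_eq, drop_mkP, List.take_left]

theorem seg_rest (t rest : BinStr) (s : ℕ) :
    seg (t.length + 1 + t.length) s (mkP t rest) = rest.take s := by
  rw [seg_eq, drop_mkP2]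

theorem qT_mkP (t rest : BinStr) : qT (mkP t rest) = rest := by
  unfold qT
  rw [pk_mkP, seg_rest, List.take_of_length_le]
  rw [length_mkP]; omega

theorem iC_mkP (t ib q' : BinStr) (h : (tV (mkP t (ib ++ q'))).unpair.2.unpair.2 = ib.length) :
    iC (mkP t (ib ++ q')) = dN ib := by
  unfold iC jC
  rw [pk_mkP, h, seg_rest, List.take_left]

theorem qC_mkP (t ib q' : BinStr) (h : (tV (mkP t (ib ++ q'))).unpair.2.unpair.2 = ib.length) :
    qC (mkP t (ib ++ q')) = q' := by
  unfold qC jC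
  rw [pk_mkP, h, seg_eq, ← List.drop_drop, drop_mkP2, List.drop_left,
    List.take_of_length_le]
  rw [length_mkP]; simp [List.length_append]; omega

theorem pair_lt (a b : ℕ) : Nat.pair a b < (max a b + 1)^2 := by
  rw [Nat.pair]
  split
  · rename_i h
    rw [max_eq_right (le_of_lt h)]
    nlinarith
  · rename_i h
    rw [max_eq_left (by omega)]
    nlinarith

end SPT

theorem mem_allStr (z : BinStr) : z ∈ allStr z.length := by
  induction z with
  | nil => simp [allStr]
  | cons b z ih =>
    have h : ∀ bb : Bool, (bb :: z : BinStr) ∈ (allStr z.length).image (List.cons bb) :=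
      fun bb => Finset.mem_image.2 ⟨z, ih, rfl⟩
    show (b :: z : BinStr) ∈ (allStr z.length).image (List.cons true) ∪
      (allStr z.length).image (List.cons false)
    cases b
    · exact Finset.mem_union_right _ (h false)
    · exact Finset.mem_union_left _ (h true)

theorem card_allStr (n : ℕ) : (allStr n).card ≤ 2^n := by
  induction n with
  | zero => simp [allStr]
  | succ n ih =>
    calc (allStr (n+1)).card
        ≤ ((allStr n).image (List.cons true)).card + ((allStr n).image (List.cons false)).card :=
          Finset.card_union_le _ _
      _ ≤ (allStr n).card + (allStr n).card :=
          Nat.add_le_add (Finset.card_image_le) (Finset.card_image_le)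
      _ ≤ 2^n + 2^n := Nat.add_le_add ih ih
      _ = 2^(n+1) := by ring

/-- trade-off for the ε-strong profile:
(a, b+c) ∈ P_x^ε implies (a + b + O(log n), c) ∈ P_x^{ε+O(log n)}. -/
theorem strong_profile_tradeoff
    (U : BinStr → BinStr → Part BinStr) (hU : IsUniversal U) :
    ∃ d : ℕ, ∀ (x : BinStr) (n a b c ε : ℕ), x.length = n →
      (a, b + c) ∈ strongProfile U ε x →
      (a + b + d * (Nat.log 2 n + 1), c) ∈ strongProfile U (ε + d * (Nat.log 2 n + 1)) x := by
  classical
  obtain ⟨hUd, hUuniv⟩ := hU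
  obtain ⟨cT, hcT⟩ := hUuniv (SPT.Dt U) (SPT.partrec_Dt hUd)
  obtain ⟨cC, hcC⟩ := hUuniv (SPT.Dc U) (SPT.partrec_Dc hUd)
  refine ⟨cT.length + cC.length + 18, ?_⟩
  intro x n a b c ε hx hmem
  obtain ⟨A, hxA, hCTA, hCA, hcard⟩ := hmem
  set d : ℕ := cT.length + cC.length + 18 with hd
  set L : ℕ := Nat.log 2 n with hL
  -- minimal programs for A
  have hD0 : Partrec₂ (fun (_ _ : BinStr) => Part.some (codeSet A)) := by
    unfold Partrec₂
    exact Partrec.const' _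
  obtain ⟨c0', hc0'⟩ := hUuniv _ hD0
  have hc0 : ∀ y, Part.some (codeSet A) = U c0' y := by
    intro y
    have := hc0' [] y
    rwa [List.append_nil] at this
  have h1 : ∃ p : BinStr, p.length = CT U (codeSet A) x ∧ (∀ y' : BinStr, (U p y').Dom) ∧
      codeSet A ∈ U p x := by
    refine Nat.sInf_mem (s := {m | ∃ p : BinStr, p.length = m ∧ (∀ y' : BinStr, (U p y').Dom) ∧
      codeSet A ∈ U p x}) ⟨c0'.length, c0', rfl, fun y' => ?_, ?_⟩
    · rw [← hc0 y']; trivial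
    · rw [← hc0 x]; exact Part.mem_some _
  obtain ⟨p0, hp0len, hp0tot, hp0mem⟩ := h1
  have h2 : ∃ p : BinStr, p.length = CSet U A ∧ codeSet A ∈ U p [] := by
    refine Nat.sInf_mem (s := {m | ∃ p : BinStr, p.length = m ∧ codeSet A ∈ U p []})
      ⟨c0'.length, c0', rfl, ?_⟩
    rw [← hc0 []]; exact Part.mem_some _
  obtain ⟨q, hqlen, hqmem⟩ := h2
  -- the split set
  set c' : ℕ := min c n with hc'
  set Lst : List BinStr := Finset.sort A SPT.r with hLst
  set F : List BinStr := Lst.filter (fun z => z.length == n) with hF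
  have hxL : x ∈ Lst := (Finset.mem_sort _).2 hxA
  have hxF : x ∈ F := by
    rw [hF, List.mem_filter]
    exact ⟨hxL, by simp [hx]⟩
  set j0 : ℕ := SPT.idx x F with hj0
  have hj0lt : j0 < F.length := by
    rw [hj0]; unfold SPT.idx
    exact List.findIdx_lt_length_of_exists ⟨x, hxF, by simp⟩
  have hj0get : F[j0]'hj0lt = x := by
    have h := List.findIdx_getElem (p := fun z => decide (z = x)) (xs := F)
      (w := by rw [hj0] at hj0lt; exact hj0lt)
    convert of_decide_eq_true h
    congr 1
  set i0 : ℕ := j0 / 2 ^ c' with hi0def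
  set M : List BinStr := SPT.seg (i0 * 2 ^ c') (2 ^ c') F with hM
  set A' : Finset BinStr := M.toFinset with hA'
  have hMsub : M.Sublist F := by
    rw [hM, SPT.seg_eq]
    exact (List.take_sublist _ _).trans (List.drop_sublist _ _)
  have hFsort : F.Pairwise SPT.r := (Finset.pairwise_sort (s := A) (r := SPT.r)).filter _
  have hFnd : F.Nodup := (Finset.sort_nodup (s := A) (r := SPT.r)).filter _
  have hMsort : M.Pairwise SPT.r := List.Pairwise.sublist hMsub hFsort
  have hMnd : M.Nodup := hFnd.sublist hMsub
  have hspos : 0 < 2 ^ c' := Nat.two_pow_pos c'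
  have hxM : x ∈ M := by
    have hle : i0 * 2 ^ c' ≤ j0 := Nat.div_mul_le_self _ _
    have hlt : j0 < i0 * 2 ^ c' + 2 ^ c' := by
      have h1 := Nat.div_add_mod j0 (2 ^ c')
      rw [← hi0def] at h1
      have h2 : j0 % 2 ^ c' < 2 ^ c' := Nat.mod_lt _ hspos
      have h3 : 2 ^ c' * i0 = i0 * 2 ^ c' := Nat.mul_comm _ _
      omega
    have h5 : ((F.drop (i0 * 2 ^ c')).take (2 ^ c'))[j0 - i0 * 2 ^ c']? = some x := by
      rw [List.getElem?_take, if_pos (by omega), List.getElem?_drop]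
      have h4 : i0 * 2 ^ c' + (j0 - i0 * 2 ^ c') = j0 := by omega
      rw [h4, List.getElem?_eq_getElem hj0lt, hj0get]
    obtain ⟨hh, he⟩ := List.getElem?_eq_some_iff.1 h5
    rw [hM, SPT.seg_eq]
    exact he ▸ List.getElem_mem hh
  have hxA' : x ∈ A' := List.mem_toFinset.2 hxM
  have hMlen : M.length ≤ 2 ^ c' := by
    rw [hM, SPT.seg_eq]
    exact List.length_take_le _ _
  have hlogA' : Nat.log 2 A'.card ≤ c := by
    have h5 : A'.card ≤ 2 ^ c' := le_trans M.toFinset_card_le hMlen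
    calc Nat.log 2 A'.card ≤ Nat.log 2 (2 ^ c') := Nat.log_mono_right h5
      _ = c' := Nat.log_pow (by norm_num) c'
      _ ≤ c := min_le_left _ _
  have hcode : codeSet A' = Nat.bits (Encodable.encode M) := by
    unfold codeSet
    rw [hA', SPT.encode_toFinset_eq hMnd hMsort]
  -- length bounds
  have hFlen1 : F.length ≤ A.card := by
    calc F.length ≤ Lst.length := List.length_filter_le _ _
      _ = A.card := Finset.length_sort _
  have hFlen2 : F.length ≤ 2 ^ n := by
    have hsub : F.toFinset ⊆ allStr n := by
      intro z hz
      rw [List.mem_toFinset, hF, List.mem_filter] at hz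
      have hzn : z.length = n := by simpa using hz.2
      have := mem_allStr z
      rwa [hzn] at this
    calc F.length = F.toFinset.card := (List.toFinset_card_of_nodup hFnd).symm
      _ ≤ (allStr n).card := Finset.card_le_card hsub
      _ ≤ 2 ^ n := card_allStr n
  have hAcard : A.card < 2 ^ (b + c + 1) :=
    lt_of_lt_of_le (Nat.lt_pow_succ_log_self (by norm_num) _)
      (Nat.pow_le_pow_right (by norm_num) (by omega))
  have hi0lt : i0 < 2 ^ (min b n + 1) := by
    rcases le_or_gt b n with hbn | hbn
    · rw [min_eq_left hbn]
      rcases le_or_gt c n with hcn | hcn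
      · have hcc : c' = c := min_eq_left hcn
        rw [hi0def, hcc]
        refine (Nat.div_lt_iff_lt_mul (Nat.two_pow_pos c)).2 ?_
        calc j0 < F.length := hj0lt
          _ ≤ A.card := hFlen1
          _ < 2 ^ (b + c + 1) := hAcard
          _ = 2 ^ (b + 1) * 2 ^ c := by rw [← pow_add]; ring_nf
      · have hcc : c' = n := min_eq_right (le_of_lt hcn)
        have hj : j0 < 2 ^ n := lt_of_lt_of_le hj0lt hFlen2
        rw [hi0def, hcc, Nat.div_eq_of_lt hj]
        exact Nat.two_pow_pos _
    · rw [min_eq_right (le_of_lt hbn)]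
      calc i0 ≤ j0 := Nat.div_le_self _ _
        _ < 2 ^ n := lt_of_lt_of_le hj0lt hFlen2
        _ < 2 ^ (n + 1) := Nat.pow_lt_pow_right (by norm_num) (by omega)
  set ib : BinStr := Nat.bits i0 with hib
  set jb : ℕ := ib.length with hjb
  have hjble : jb ≤ min b n + 1 := by
    rw [hjb, hib, Nat.size_eq_bits_len]
    exact Nat.size_le.2 hi0lt
  have hn1 : n + 1 ≤ 2 ^ (L + 1) := Nat.lt_pow_succ_log_self (by norm_num) n
  -- Fof computes F
  have hFof : SPT.Fof n (codeSet A) = F := by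
    unfold SPT.Fof codeSet
    rw [SPT.dN_bits, SPT.encode_finset_eq_encode_sort, Encodable.encodek]
    rfl
  ------------------------------------------------------------------
  -- CT part
  ------------------------------------------------------------------
  set t1 : BinStr := Nat.bits (Nat.pair n c') with ht1
  have hkt : t1.length ≤ 2 * L + 2 := by
    rw [ht1, Nat.size_eq_bits_len]
    refine Nat.size_le.2 ?_
    calc Nat.pair n c' < (max n c' + 1) ^ 2 := SPT.pair_lt _ _
      _ ≤ (n + 1) ^ 2 := Nat.pow_le_pow_left (by omega) 2
      _ ≤ (2 ^ (L + 1)) ^ 2 := Nat.pow_le_pow_left hn1 2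
      _ = 2 ^ (2 * L + 2) := by rw [← pow_mul]; ring_nf
  set Pt : BinStr := SPT.mkP t1 p0 with hPt
  have htV1 : SPT.tV Pt = Nat.pair n c' := by
    rw [hPt, SPT.tV_mkP, ht1, SPT.dN_bits]
  have houtT : SPT.outT Pt x (codeSet A) = codeSet A' := by
    unfold SPT.outT
    rw [htV1, Nat.unpair_pair]
    simp only []
    rw [hFof, hcode]
  have hCTA' : CT U (codeSet A') x ≤ ε + d * (L + 1) := by
    have hmemset : (cT ++ Pt).length ∈ {m | ∃ p : BinStr, p.length = m ∧
        (∀ y' : BinStr, (U p y').Dom) ∧ codeSet A' ∈ U p x} := by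
      refine ⟨cT ++ Pt, rfl, fun y' => ?_, ?_⟩
      · rw [← hcT Pt y']
        show (SPT.Dt U Pt y').Dom
        unfold SPT.Dt
        rw [hPt, SPT.qT_mkP, ← hPt]
        exact Part.dom_iff_mem.2 ⟨_, Part.mem_map _ (Part.get_mem (hp0tot y'))⟩
      · rw [← hcT Pt x]
        show codeSet A' ∈ SPT.Dt U Pt x
        unfold SPT.Dt
        rw [hPt, SPT.qT_mkP, ← hPt, ← houtT]
        exact Part.mem_map _ hp0mem
    have hsinf : CT U (codeSet A') x ≤ (cT ++ Pt).length := Nat.sInf_le hmemset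
    have hlen : (cT ++ Pt).length = cT.length + (2 * t1.length + 1 + p0.length) := by
      rw [List.length_append, hPt, SPT.length_mkP]
    have hp0le : p0.length ≤ ε := le_trans (le_of_eq hp0len) hCTA
    have hdL : cT.length + 4 * L + 5 ≤ d * (L + 1) := by
      have h18 : 18 * L ≤ d * L := Nat.mul_le_mul_right L (by omega)
      have hdd : d * (L + 1) = d * L + d := by ring
      omega
    omega
  ------------------------------------------------------------------
  -- C part
  ------------------------------------------------------------------
  set t2 : BinStr := Nat.bits (Nat.pair n (Nat.pair c' jb)) with ht2
  have hkc : t2.length ≤ 4 * L + 8 := by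
    rw [ht2, Nat.size_eq_bits_len]
    refine Nat.size_le.2 ?_
    have hinner : Nat.pair c' jb < 2 ^ (2 * L + 4) := by
      calc Nat.pair c' jb < (max c' jb + 1) ^ 2 := SPT.pair_lt _ _
        _ ≤ (n + 2) ^ 2 := Nat.pow_le_pow_left (by omega) 2
        _ ≤ (2 ^ (L + 2)) ^ 2 := Nat.pow_le_pow_left (by
            calc n + 2 ≤ (n + 1) * 2 := by omega
              _ ≤ 2 ^ (L + 1) * 2 := by omega
              _ = 2 ^ (L + 2) := by ring) 2
        _ = 2 ^ (2 * L + 4) := by rw [← pow_mul]; ring_nf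
    calc Nat.pair n (Nat.pair c' jb) < (max n (Nat.pair c' jb) + 1) ^ 2 := SPT.pair_lt _ _
      _ ≤ (2 ^ (2 * L + 4)) ^ 2 := Nat.pow_le_pow_left (by
          have h6 : n + 1 ≤ 2 ^ (2 * L + 4) := le_trans hn1
            (Nat.pow_le_pow_right (by norm_num) (by omega))
          omega) 2
      _ = 2 ^ (4 * L + 8) := by rw [← pow_mul]; ring_nf
  set Pc : BinStr := SPT.mkP t2 (ib ++ q) with hPc
  have htV2 : SPT.tV Pc = Nat.pair n (Nat.pair c' jb) := by
    rw [hPc, SPT.tV_mkP, ht2, SPT.dN_bits]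
  have hjC2 : (SPT.tV Pc).unpair.2.unpair.2 = ib.length := by
    rw [htV2, Nat.unpair_pair]
    simp only []
    rw [Nat.unpair_pair]
  have hiC2 : SPT.iC Pc = i0 := by
    rw [hPc, SPT.iC_mkP t2 ib q (by rw [← hPc]; exact hjC2), hib, SPT.dN_bits]
  have hqC2 : SPT.qC Pc = q := by
    rw [hPc, SPT.qC_mkP t2 ib q (by rw [← hPc]; exact hjC2)]
  have houtC : SPT.outC Pc (codeSet A) = codeSet A' := by
    unfold SPT.outC
    rw [htV2, Nat.unpair_pair]
    simp only []
    rw [Nat.unpair_pair]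
    simp only []
    rw [hiC2, hFof, hcode]
  have hCA' : CSet U A' ≤ a + b + d * (L + 1) := by
    have hmemset : (cC ++ Pc).length ∈ {m | ∃ p : BinStr, p.length = m ∧
        codeSet A' ∈ U p []} := by
      refine ⟨cC ++ Pc, rfl, ?_⟩
      rw [← hcC Pc []]
      show codeSet A' ∈ SPT.Dc U Pc []
      unfold SPT.Dc
      rw [hqC2, ← houtC]
      exact Part.mem_map _ hqmem
    have hsinf : CSet U A' ≤ (cC ++ Pc).length := Nat.sInf_le hmemset
    have hlen : (cC ++ Pc).length = cC.length + (2 * t2.length + 1 + (jb + q.length)) := by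
      rw [List.length_append, hPc, SPT.length_mkP, List.length_append, hjb]
    have hqle : q.length ≤ a := le_trans (le_of_eq hqlen) hCA
    have hjbb : jb ≤ b + 1 := by omega
    have hdL : cC.length + 8 * L + 18 ≤ d * (L + 1) := by
      have h18 : 18 * L ≤ d * L := Nat.mul_le_mul_right L (by omega)
      have hdd : d * (L + 1) = d * L + d := by ring
      omega
    omega
  exact ⟨A', hxA', hCTA', hCA', hlogA'⟩
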